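/- Let G be a total-payoff game, τ a strategy for Min, and π = v₁…v_i a finite play conforming to τ. Then TP(v₁…v_i) + Val(v_i) ≤ Val(v₁, τ). -/

import Mathlib

open Filter

/-- A two-player turn-based weighted game graph. `owner v = true` means that
vertex `v` belongs to player Max, `owner v = false` that it belongs to player Min.
Every vertex has at least one successor. -/
structure Game (V : Type) where
  owner : V → Bool
  E : V → V → Prop
  nonempty : ∀ v, ∃ v', E v v'
  w : V → V → ℤ

namespace Game

variable {V : Type}

/-- The (reversed) history of the first `k` vertices of `π` (most recent first). -/
def hist (π : ℕ → V) (k : ℕ) : List V := (List.ofFn fun i : Fin k => π i).reverse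

/-- A strategy: given the (reversed) list of previously visited vertices and the current
vertex, it picks a successor of the current vertex. -/
structure Strategy (g : Game V) where
  next : List V → V → V
  valid : ∀ h v, g.E v (next h v)

/-- A memoryless strategy only depends on the current vertex. -/
def Strategy.Memoryless {g : Game V} (s : g.Strategy) : Prop :=
  ∀ h h' v, s.next h v = s.next h' v

/-- A finite-memory strategy is one encoded by a deterministic Moore machine
`⟨M, m0, up, dec⟩`: the choice after a finite play is `dec` applied to the memory state
reached by reading the play (the initial vertex is not read) and to the last vertex. -/
def Strategy.FiniteMemory {g : Game V} (s : g.Strategy) : Prop :=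
  ∃ (M : Type) (_ : Fintype M) (m0 : M) (up : M → V → M) (dec : M → V → V),
    ∀ h v, s.next h v = dec (List.foldl up m0 (((h.reverse ++ [v]).drop 1))) v

variable (g : Game V)

/-- Next vertex chosen by the owner of the current vertex. -/
def step (σ τ : g.Strategy) (h : List V) (v : V) : V :=
  if g.owner v then σ.next h v else τ.next h v

/-- Current vertex and reversed history after `k` steps of the play `Play(v, σ, τ)`. -/
def playAux (σ τ : g.Strategy) (v : V) : ℕ → V × List V
  | 0 => (v, [])
  | k+1 =>
      let p := playAux σ τ v k
      (g.step σ τ p.2 p.1, p.1 :: p.2)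

/-- `Play(v, σ, τ)`: the unique play starting in `v` and conforming to the
strategy `σ` of Max and the strategy `τ` of Min. -/
def play (σ τ : g.Strategy) (v : V) (k : ℕ) : V := (g.playAux σ τ v k).1

/-- An infinite sequence of vertices is a play when consecutive vertices are linked
by edges. -/
def IsPlay (π : ℕ → V) : Prop := ∀ k, g.E (π k) (π (k+1))

/-- A play conforms to a strategy `s` of the player `p` if, whenever the current vertex
belongs to `p`, the next vertex is the one prescribed by `s`. -/
def Conforms (p : Bool) (s : g.Strategy) (π : ℕ → V) : Prop :=
  ∀ k, g.owner (π k) = p → π (k+1) = s.next (hist π k) (π k)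

/-- Total-payoff of the prefix of length `k`: the sum of the first `k` edge weights. -/
def TPfin (π : ℕ → V) (k : ℕ) : ℤ := ∑ i ∈ Finset.range k, g.w (π i) (π (i+1))

/-- Total payoff of an infinite play: `liminf` of the payoffs of its prefixes. -/
noncomputable def TP (π : ℕ → V) : EReal :=
  liminf (fun k => (((g.TPfin π k : ℤ) : ℝ) : EReal)) atTop

/-- Mean payoff of an infinite play. -/
noncomputable def MP (π : ℕ → V) : EReal :=
  liminf (fun k => ((((g.TPfin π k : ℤ) : ℝ) / (k : ℝ)) : EReal)) atTop

open Classical in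
/-- Min-cost reachability payoff with target `t`: total payoff up to the first visit
of `t`, and `+∞` if `t` is never visited. -/
noncomputable def MCR (t : V) (π : ℕ → V) : EReal :=
  if h : ∃ k, π k = t then (((g.TPfin π (Nat.find h) : ℤ) : ℝ) : EReal) else ⊤

open Classical in
/-- `MCR` payoff restricted to reaching the target among the first `i+1` vertices. -/
noncomputable def MCRbd (t : V) (i : ℕ) (π : ℕ → V) : EReal :=
  if ∃ k ≤ i, π k = t then g.MCR t π else ⊤

/-- Value of a strategy `σ` of Max from `v` : `inf_τ P(Play(v, σ, τ))`. -/
noncomputable def valMax (P : (ℕ → V) → EReal) (v : V) (σ : g.Strategy) : EReal :=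
  ⨅ τ : g.Strategy, P (g.play σ τ v)

/-- Value of a strategy `τ` of Min from `v` : `sup_σ P(Play(v, σ, τ))`. -/
noncomputable def valMin (P : (ℕ → V) → EReal) (v : V) (τ : g.Strategy) : EReal :=
  ⨆ σ : g.Strategy, P (g.play σ τ v)

/-- Lower value `Val⁻(v) = sup_σ inf_τ P(Play(v, σ, τ))`. -/
noncomputable def lowerVal (P : (ℕ → V) → EReal) (v : V) : EReal :=
  ⨆ σ : g.Strategy, g.valMax P v σ

/-- Upper value `Val⁺(v) = inf_τ sup_σ P(Play(v, σ, τ))`. -/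
noncomputable def upperVal (P : (ℕ → V) → EReal) (v : V) : EReal :=
  ⨅ τ : g.Strategy, g.valMin P v τ

end Game

/-- A min-cost reachability game: a game together with a target vertex `t` whose only
outgoing edge is a self-loop of weight `0`. -/
structure MCRGame (V : Type) extends Game V where
  t : V
  loop : E t t
  loopOnly : ∀ v, E t v → v = t
  loopZero : w t t = 0

/-- The value of a (determined) MCR game. -/
noncomputable def MCRGame.Val {V : Type} (G : MCRGame V) : V → EReal :=
  fun v => G.toGame.lowerVal (G.toGame.MCR G.t) v

/-- The `i`-step value `val_i(v) = inf_τ sup_σ MCR_i(Play(v, σ, τ))`. -/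
noncomputable def MCRGame.ival {V : Type} (G : MCRGame V) (i : ℕ) : V → EReal :=
  fun v => G.toGame.upperVal (G.toGame.MCRbd G.t i) v

namespace GameAux

open Game Filter

variable {V : Type}

lemma hist_zero (π : ℕ → V) : Game.hist π 0 = [] := by simp [Game.hist]

lemma hist_succ (π : ℕ → V) (k : ℕ) : Game.hist π (k+1) = π k :: Game.hist π k := by
  simp only [Game.hist, List.ofFn_succ', Fin.val_last, Fin.coe_castSucc,
    List.concat_eq_append, List.reverse_append, List.reverse_cons, List.reverse_nil,
    List.nil_append, List.singleton_append]

lemma hist_length (π : ℕ → V) (k : ℕ) : (Game.hist π k).length = k := by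
  simp [Game.hist]

variable (g : Game V)

lemma playAux_snd_length (σ τ : g.Strategy) (v : V) :
    ∀ k, (g.playAux σ τ v k).2.length = k
  | 0 => rfl
  | k+1 => by simp [Game.playAux, playAux_snd_length σ τ v k]

lemma playAux_snd (σ τ : g.Strategy) (v : V) :
    ∀ k, (g.playAux σ τ v k).2 = Game.hist (g.play σ τ v) k
  | 0 => by simp [Game.playAux, hist_zero]
  | k+1 => by
      rw [Game.playAux, hist_succ]
      show (g.playAux σ τ v k).1 :: (g.playAux σ τ v k).2 = _
      rw [playAux_snd σ τ v k]; rfl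

open Classical in
/-- Max strategy that follows `π` for the first `n` steps, then mimics `σ`
(forgetting the first `n` history entries). -/
noncomputable def extStrat (π : ℕ → V) (n : ℕ) (σ : g.Strategy) : g.Strategy where
  next h v := if h.length < n ∧ g.E v (π (h.length + 1)) then π (h.length + 1)
      else σ.next (h.take (h.length - n)) v
  valid h v := by
    split_ifs with hcond
    · exact hcond.2
    · exact σ.valid _ v

/-- Min strategy with history prefixed by `H`. -/
def shiftStrat (H : List V) (τ : g.Strategy) : g.Strategy where
  next h v := τ.next (h ++ H) v
  valid h v := τ.valid _ v

end GameAux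

/-- in a total-payoff game, for every strategy `τ` of Min and every
finite play `π = v₁…v_i` conforming to `τ`, `TP(v₁…v_i) + Val(v_i) ≤ Val(v₁, τ)`.
(The finite play is given as the first `n+1` vertices of the sequence `π`.) -/
theorem statement_18 {V : Type} [Fintype V] (g : Game V) (τ : g.Strategy)
    (π : ℕ → V) (n : ℕ)
    (hplay : ∀ i, i < n → g.E (π i) (π (i+1)))
    (hconf : ∀ k, k < n → g.owner (π k) = false →
      π (k+1) = τ.next (Game.hist π k) (π k)) :
    (((g.TPfin π n : ℤ) : ℝ) : EReal) + g.lowerVal g.TP (π n) ≤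
      g.valMin g.TP (π 0) τ := by
  classical
  set c : ℤ := g.TPfin π n with hc
  set K := g.valMin g.TP (π 0) τ with hK
  have main : ∀ σ : g.Strategy, g.valMax g.TP (π n) σ + ((c : ℝ) : EReal) ≤ K := by
    intro σ
    set τ' := GameAux.shiftStrat g (Game.hist π n) τ with hτ'
    set σ' := GameAux.extStrat g π n σ with hσ'
    have hA : ∀ k, k ≤ n → g.playAux σ' τ (π 0) k = (π k, Game.hist π k) := by
      intro k
      induction k with
      | zero => intro _; simp [Game.playAux, GameAux.hist_zero]
      | succ k ih =>
        intro hk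
        have hk' : k < n := hk
        rw [Game.playAux]
        simp only [ih (Nat.le_of_lt hk')]
        rw [GameAux.hist_succ]
        refine Prod.ext ?_ rfl
        show g.step σ' τ (Game.hist π k) (π k) = π (k+1)
        rw [Game.step]
        rcases howner : g.owner (π k) with _ | _
        · simp only [Bool.false_eq_true, if_false]
          exact (hconf k hk' howner).symm
        · simp only [if_true]
          show (if (Game.hist π k).length < n ∧ g.E (π k) (π ((Game.hist π k).length + 1))
              then π ((Game.hist π k).length + 1)
              else σ.next (List.take ((Game.hist π k).length - n) (Game.hist π k)) (π k)) = π (k+1)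
          simp only [GameAux.hist_length]
          rw [if_pos ⟨hk', hplay k hk'⟩]
    have hB : ∀ k, g.playAux σ' τ (π 0) (n + k) =
        ((g.playAux σ τ' (π n) k).1, (g.playAux σ τ' (π n) k).2 ++ Game.hist π n) := by
      intro k
      induction k with
      | zero => simpa [Game.playAux] using hA n le_rfl
      | succ k ih =>
        show g.playAux σ' τ (π 0) ((n + k) + 1) = _
        rw [Game.playAux]
        simp only [ih]
        conv_rhs => rw [Game.playAux]
        refine Prod.ext ?_ rfl
        set p := g.playAux σ τ' (π n) k with hp
        show g.step σ' τ (p.2 ++ Game.hist π n) p.1 = g.step σ τ' p.2 p.1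
        have hlen : (p.2 ++ Game.hist π n).length = k + n := by
          rw [List.length_append, GameAux.playAux_snd_length, GameAux.hist_length]
        rw [Game.step, Game.step]
        rcases howner : g.owner p.1 with _ | _
        · simp only [Bool.false_eq_true, if_false]
          rfl
        · simp only [if_true]
          show (if (p.2 ++ Game.hist π n).length < n ∧
                g.E p.1 (π ((p.2 ++ Game.hist π n).length + 1))
              then π ((p.2 ++ Game.hist π n).length + 1)
              else σ.next (List.take ((p.2 ++ Game.hist π n).length - n) (p.2 ++ Game.hist π n)) p.1)
              = σ.next p.2 p.1
          simp only [hlen]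
          rw [if_neg (fun hcon => by omega : ¬(k + n < n ∧ g.E p.1 (π (k + n + 1))))]
          rw [Nat.add_sub_cancel, List.take_left' (GameAux.playAux_snd_length g σ τ' (π n) k)]
    set ρ := g.play σ' τ (π 0) with hρdef
    set θ := g.play σ τ' (π n) with hθdef
    have hρπ : ∀ j, j ≤ n → ρ j = π j := fun j hj => by
      rw [hρdef, Game.play, hA j hj]
    have hρθ : ∀ k, ρ (n + k) = θ k := fun k => by
      rw [hρdef, Game.play, hB k]; rfl
    have hTPsplit : ∀ k, g.TPfin ρ (n + k) = c + g.TPfin θ k := by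
      intro k
      induction k with
      | zero =>
        rw [Nat.add_zero]
        have h0 : g.TPfin ρ n = c := by
          rw [hc, Game.TPfin, Game.TPfin]
          refine Finset.sum_congr rfl fun i hi => ?_
          rw [Finset.mem_range] at hi
          rw [hρπ i (Nat.le_of_lt hi), hρπ (i+1) hi]
        rw [h0, Game.TPfin, Finset.sum_range_zero, add_zero]
      | succ k ih =>
        have e1 : ρ (n + k) = θ k := hρθ k
        have e2 : ρ (n + k + 1) = θ (k + 1) := hρθ (k+1)
        have expand1 : g.TPfin ρ (n + (k+1)) =
            g.TPfin ρ (n + k) + g.w (ρ (n+k)) (ρ (n+k+1)) :=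
          Finset.sum_range_succ _ _
        have expand2 : g.TPfin θ (k+1) = g.TPfin θ k + g.w (θ k) (θ (k+1)) :=
          Finset.sum_range_succ _ _
        rw [expand1, expand2, ih, e1, e2, add_assoc]
    have hTPle : ((c : ℝ) : EReal) + g.TP θ ≤ g.TP ρ := by
      have hshift : g.TP ρ = Filter.liminf
          (fun k => (((g.TPfin ρ (k + n) : ℤ) : ℝ) : EReal)) Filter.atTop := by
        rw [Game.TP]; exact (Filter.liminf_nat_add (fun k => (((g.TPfin ρ k : ℤ) : ℝ) : EReal)) n).symm
      rw [hshift]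
      have heq : (fun k => (((g.TPfin ρ (k + n) : ℤ) : ℝ) : EReal)) =
          (fun _ : ℕ => ((c : ℝ) : EReal)) + (fun k => (((g.TPfin θ k : ℤ) : ℝ) : EReal)) := by
        funext k
        have h2 : g.TPfin ρ (k + n) = c + g.TPfin θ k := by
          rw [Nat.add_comm k n]; exact hTPsplit k
        simp only [Pi.add_apply, h2]
        push_cast
        rfl
      rw [heq]
      have h3 := EReal.le_liminf_add (f := Filter.atTop)
        (u := fun _ : ℕ => ((c : ℝ) : EReal))
        (v := fun k => (((g.TPfin θ k : ℤ) : ℝ) : EReal))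
      rwa [Filter.liminf_const] at h3
    have h1 : g.valMax g.TP (π n) σ ≤ g.TP θ := iInf_le _ τ'
    have h2 : g.TP ρ ≤ K := le_iSup (fun σ'' : g.Strategy => g.TP (g.play σ'' τ (π 0))) σ'
    calc g.valMax g.TP (π n) σ + ((c : ℝ) : EReal)
        ≤ g.TP θ + ((c : ℝ) : EReal) := add_le_add_left h1 _
      _ = ((c : ℝ) : EReal) + g.TP θ := add_comm _ _
      _ ≤ g.TP ρ := hTPle
      _ ≤ K := h2
  rw [add_comm]
  refine (EReal.le_sub_iff_add_le (Or.inl (EReal.coe_ne_bot _))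
    (Or.inl (EReal.coe_ne_top _))).mp ?_
  rw [Game.lowerVal]
  exact iSup_le fun σ => (EReal.le_sub_iff_add_le (Or.inl (EReal.coe_ne_bot _))
    (Or.inl (EReal.coe_ne_top _))).mpr (main σ)
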